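/- Gremban reduction: Let M ∈ ℝ^{n×n} be an SDDM matrix, written as M = D + L where L is a weighted graph Laplacian and D is a nonnegative diagonal matrix with diagonal vector d· ∈ ℝⁿ. Define the (n+1)×(n+1) matrix L̂ that agrees with L on the first n coordinates augmented by, for each i with d·(i) > 0, an edge of weight d·(i) between vertex i and the extra vertex n+1; that is, L̂ = [[L + D, −d·], [−d·ᵀ, Σ_i d·(i)]]. Then L̂ is a weighted graph Laplacian on n+1 vertices, and for any b ∈ ℝⁿ, if y ∈ ℝ^{n+1} satisfies L̂ y = b̂ where b̂ = (b, −Σ_i b(i)), then the vector x ∈ ℝⁿ defined by x(i) = y(i) − y(n+1) satisfies M x = b. -/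
import Mathlib

open Matrix Finset

/-- `edgeVec i j = e_i - e_j`, the pair vector of an edge. -/
def edgeVec {m : Type*} [DecidableEq m] (i j : m) : m → ℝ :=
  fun k => (if k = i then 1 else 0) - (if k = j then 1 else 0)

/-- A matrix is a weighted graph Laplacian if it is a nonnegative combination of
edge Laplacians `(e_i - e_j)(e_i - e_j)ᵀ`. -/
def IsLaplacian {m : Type*} [Fintype m] [LinearOrder m] (L : Matrix m m ℝ) : Prop :=
  ∃ w : m → m → ℝ, (∀ i j, 0 ≤ w i j) ∧ (∀ i j, w i j = w j i) ∧
    L = ∑ i, ∑ j, if i < j then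
      w i j • Matrix.vecMulVec (edgeVec i j) (edgeVec i j) else 0

lemma half_sum {m : Type*} [Fintype m] [LinearOrder m] (g : m → m → ℝ)
    (hsym : ∀ i j, g i j = g j i) (hdiag : ∀ i, g i i = 0) :
    ∑ i, ∑ j, (if i < j then g i j else 0) = (1/2) * ∑ i, ∑ j, g i j := by
  have key : ∑ i, ∑ j, g i j
      = (∑ i, ∑ j, (if i < j then g i j else 0)) + ∑ i, ∑ j, (if j < i then g i j else 0) := by
    rw [← Finset.sum_add_distrib]
    congr 1; ext i
    rw [← Finset.sum_add_distrib]
    congr 1; ext j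
    rcases lt_trichotomy i j with h | h | h
    · simp [h, not_lt_of_gt h]
    · simp [h, hdiag]
    · simp [h, not_lt_of_gt h]
  have sw : ∑ i, ∑ j, (if j < i then g i j else 0)
      = ∑ i, ∑ j, (if i < j then g i j else 0) := by
    rw [Finset.sum_comm]
    congr 1; ext i; congr 1; ext j
    simp [hsym i j]
  rw [sw] at key
  linarith

lemma full_sum {m : Type*} [Fintype m] [DecidableEq m] (w : m → m → ℝ)
    (hsym : ∀ i j, w i j = w j i) (a b : m) :
    ∑ i, ∑ j, w i j * edgeVec i j a * edgeVec i j b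
      = 2 * (if a = b then ∑ j, w a j else 0) - 2 * w a b := by
  have expand : ∀ i j, w i j * edgeVec i j a * edgeVec i j b
      = ((if b = j then (if a = i then -(w i j) else 0) else 0)
        + (if a = j then (if b = i then -(w i j) else 0) else 0))
        + ((if a = i then (if b = i then w i j else 0) else 0)
        + (if a = j then (if b = j then w i j else 0) else 0)) := by
    intro i j
    simp only [edgeVec]
    by_cases h1 : a = i <;> by_cases h2 : a = j <;> by_cases h3 : b = i <;> by_cases h4 : b = j <;>
      simp only [h1, h2, h3, h4, if_pos, if_neg, if_true, if_false, eq_self_iff_true,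
        not_false_iff] <;> simp_all <;> ring
  simp only [expand, Finset.sum_add_distrib]
  rw [Finset.sum_comm (f := fun i j => (if a = j then (if b = j then w i j else 0) else 0))]
  simp only [Finset.sum_ite_eq, Finset.sum_ite_irrel, Finset.sum_const_zero,
    Finset.mem_univ, if_true]
  by_cases hab : a = b
  · subst hab; simp only [if_pos rfl, eq_self_iff_true, if_true]
    have h2 : ∑ x, w x a = ∑ x, w a x := Finset.sum_congr rfl fun x _ => hsym x a
    rw [h2]; ring
  · simp [hab, Ne.symm hab, hsym a b]; ring

lemma Sw_apply {m : Type*} [Fintype m] [LinearOrder m] (w : m → m → ℝ)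
    (hsym : ∀ i j, w i j = w j i) (hdiag : ∀ i, w i i = 0) (a b : m) :
    (∑ i, ∑ j, if i < j then w i j • Matrix.vecMulVec (edgeVec i j) (edgeVec i j) else 0) a b
      = (if a = b then ∑ j, w a j else 0) - w a b := by
  have e1 : (∑ i, ∑ j, if i < j then w i j • Matrix.vecMulVec (edgeVec i j) (edgeVec i j) else 0) a b
      = ∑ i, ∑ j, (if i < j then w i j * edgeVec i j a * edgeVec i j b else 0) := by
    simp only [Matrix.sum_apply]
    refine Finset.sum_congr rfl fun i _ => Finset.sum_congr rfl fun j _ => ?_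
    split_ifs with h
    · simp [Matrix.vecMulVec_apply, mul_assoc]
    · simp
  rw [e1, half_sum (fun i j => w i j * edgeVec i j a * edgeVec i j b)
    (fun i j => by
      have h1 : edgeVec j i a = -edgeVec i j a := by simp only [edgeVec]; ring
      have h2 : edgeVec j i b = -edgeVec i j b := by simp only [edgeVec]; ring
      show w i j * edgeVec i j a * edgeVec i j b = w j i * edgeVec j i a * edgeVec j i b
      rw [h1, h2, hsym]; ring)
    (fun i => by show w i i * edgeVec i i a * edgeVec i i b = 0
                 simp [edgeVec, hdiag]),
    full_sum w hsym a b]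
  ring

lemma isLaplacian_props {m : Type*} [Fintype m] [LinearOrder m] (A : Matrix m m ℝ)
    (h : IsLaplacian A) :
    (∀ i j, A i j = A j i) ∧ (∀ i j, i ≠ j → A i j ≤ 0) ∧ (∀ i, ∑ j, A i j = 0) := by
  obtain ⟨w, hw0, hwsym, hA⟩ := h
  set w' : m → m → ℝ := fun i j => if i = j then 0 else w i j with hw'
  have hw'sym : ∀ i j, w' i j = w' j i := by
    intro i j; simp only [hw']
    by_cases h : i = j
    · simp [h]
    · simp [h, Ne.symm h, hwsym i j]
  have hw'diag : ∀ i, w' i i = 0 := by intro i; simp [hw']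
  have hw'0 : ∀ i j, 0 ≤ w' i j := by
    intro i j; simp only [hw']; split_ifs; exacts [le_refl 0, hw0 i j]
  have hS : A = ∑ i, ∑ j, if i < j then
      w' i j • Matrix.vecMulVec (edgeVec i j) (edgeVec i j) else 0 := by
    rw [hA]
    refine Finset.sum_congr rfl fun i _ => Finset.sum_congr rfl fun j _ => ?_
    split_ifs with h
    · have : w' i j = w i j := by simp [hw', ne_of_lt h]
      rw [this]
    · rfl
  have hE : ∀ a b, A a b = (if a = b then ∑ j, w' a j else 0) - w' a b := by
    intro a b; rw [hS]; exact Sw_apply w' hw'sym hw'diag a b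
  refine ⟨?_, ?_, ?_⟩
  · intro i j
    rw [hE i j, hE j i]
    by_cases h : i = j
    · subst h; rfl
    · simp [h, Ne.symm h, hw'sym i j]
  · intro i j hij
    rw [hE i j]
    simp only [if_neg hij]
    have := hw'0 i j
    linarith
  · intro i
    simp only [hE]
    rw [Finset.sum_sub_distrib]
    simp [Finset.sum_ite_eq]

lemma isLaplacian_of {m : Type*} [Fintype m] [LinearOrder m] (A : Matrix m m ℝ)
    (hs : ∀ i j, A i j = A j i) (ho : ∀ i j, i ≠ j → A i j ≤ 0) (hr : ∀ i, ∑ j, A i j = 0) :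
    IsLaplacian A := by
  set w : m → m → ℝ := fun i j => if i = j then 0 else -A i j with hw
  have hwsym : ∀ i j, w i j = w j i := by
    intro i j; simp only [hw]
    by_cases h : i = j
    · simp [h]
    · simp [h, Ne.symm h, hs i j]
  have hwdiag : ∀ i, w i i = 0 := by intro i; simp [hw]
  refine ⟨w, ?_, hwsym, ?_⟩
  · intro i j; simp only [hw]; split_ifs with h
    · exact le_refl 0
    · linarith [ho i j h]
  · ext a b
    rw [Sw_apply w hwsym hwdiag a b]
    by_cases hab : a = b
    · subst hab
      simp only [if_pos rfl, hwdiag, sub_zero]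
      have : ∀ j, w a j = -A a j + (if a = j then A a j else 0) := by
        intro j; simp only [hw]
        by_cases h : a = j
        · subst h; simp
        · simp [h, Ne.symm h]
      rw [Finset.sum_congr rfl fun j _ => this j, Finset.sum_add_distrib]
      simp [Finset.sum_ite_eq, Finset.sum_neg_distrib, hr a]
    · simp [if_neg hab, hw, hab]

/-- Gremban reduction: for an SDDM matrix `M = D + L` (with `L` a Laplacian and
`D = diag(dv)` nonnegative diagonal), the bordered matrix
`L̂ = [[L + D, -dv], [-dvᵀ, Σᵢ dv(i)]]` is a weighted graph Laplacian on `n+1`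
vertices, and whenever `L̂ y = (b, -Σᵢ b(i))`, the vector
`x(i) = y(i) - y(n+1)` solves `M x = b`. -/
theorem gremban_reduction {n : ℕ} (M L : Matrix (Fin n) (Fin n) ℝ)
    (hL : IsLaplacian L) (dv : Fin n → ℝ) (hdv : ∀ i, 0 ≤ dv i)
    (hM : M = Matrix.diagonal dv + L)
    (Lhat : Matrix (Fin (n + 1)) (Fin (n + 1)) ℝ)
    (hLhat : Lhat = Matrix.of fun i j : Fin (n + 1) =>
      if hi : (i : ℕ) < n then
        if hj : (j : ℕ) < n then M ⟨i, hi⟩ ⟨j, hj⟩ else -dv ⟨i, hi⟩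
      else if hj : (j : ℕ) < n then -dv ⟨j, hj⟩ else ∑ t, dv t) :
    IsLaplacian Lhat ∧
    ∀ b : Fin n → ℝ, ∀ y : Fin (n + 1) → ℝ,
      Lhat.mulVec y = (fun i : Fin (n + 1) => if hi : (i : ℕ) < n then b ⟨i, hi⟩ else -∑ t, b t) →
      M.mulVec (fun i => y i.castSucc - y (Fin.last n)) = b := by
  obtain ⟨Ls, Lo, Lr⟩ := isLaplacian_props L hL
  -- properties of M
  have Msym : ∀ i j, M i j = M j i := by
    intro i j; rw [hM]
    simp only [Matrix.add_apply, Matrix.diagonal_apply, Ls i j]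
    by_cases h : i = j
    · simp [h]
    · simp [h, Ne.symm h]
  have Moff : ∀ i j : Fin n, i ≠ j → M i j ≤ 0 := by
    intro i j h; rw [hM]
    simp only [Matrix.add_apply, Matrix.diagonal_apply_ne _ h, zero_add]
    exact Lo i j h
  have Mrow : ∀ i, ∑ j, M i j = dv i := by
    intro i; rw [hM]
    simp only [Matrix.add_apply, Finset.sum_add_distrib, Lr i, add_zero,
      Matrix.diagonal_apply]
    simp [Finset.sum_ite_eq]
  -- entries of Lhat
  have hE1 : ∀ (i j : Fin n), Lhat i.castSucc j.castSucc = M i j := by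
    intro i j; rw [hLhat]
    simp [Fin.is_lt]
  have hE2 : ∀ i : Fin n, Lhat i.castSucc (Fin.last n) = -dv i := by
    intro i; rw [hLhat]
    simp [Fin.is_lt]
  have hE3 : ∀ j : Fin n, Lhat (Fin.last n) j.castSucc = -dv j := by
    intro j; rw [hLhat]
    simp [Fin.is_lt]
  have hE4 : Lhat (Fin.last n) (Fin.last n) = ∑ t, dv t := by
    rw [hLhat]; simp
  constructor
  · apply isLaplacian_of
    · intro i j
      induction i using Fin.lastCases with
      | last =>
        induction j using Fin.lastCases with
        | last => rfl
        | cast j => rw [hE3, hE2]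
      | cast i =>
        induction j using Fin.lastCases with
        | last => rw [hE2, hE3]
        | cast j => rw [hE1, hE1, Msym]
    · intro i j hij
      induction i using Fin.lastCases with
      | last =>
        induction j using Fin.lastCases with
        | last => exact absurd rfl hij
        | cast j => rw [hE3]; linarith [hdv j]
      | cast i =>
        induction j using Fin.lastCases with
        | last => rw [hE2]; linarith [hdv i]
        | cast j =>
          rw [hE1]
          exact Moff i j (fun h => hij (by rw [h]))
    · intro i
      induction i using Fin.lastCases with
      | last =>
        rw [Fin.sum_univ_castSucc]
        simp only [hE3, hE4]
        simp
      | cast i =>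
        rw [Fin.sum_univ_castSucc]
        simp only [hE1, hE2, Mrow i]
        ring
  · intro b y hy
    funext i
    have hrow := congrFun hy i.castSucc
    simp only [Matrix.mulVec, dotProduct] at hrow ⊢
    rw [Fin.sum_univ_castSucc] at hrow
    simp only [hE1, hE2] at hrow
    have hrow2 : (if hi : ((i.castSucc : Fin (n+1)) : ℕ) < n then b ⟨i.castSucc, hi⟩ else -∑ t, b t) = b i := by
      simp [Fin.is_lt]
    rw [hrow2] at hrow
    have expand : ∑ j, M i j * (y j.castSucc - y (Fin.last n))
        = ∑ j, M i j * y j.castSucc - (∑ j, M i j) * y (Fin.last n) := by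
      rw [Finset.sum_mul, ← Finset.sum_sub_distrib]
      exact Finset.sum_congr rfl fun j _ => by ring
    rw [expand, Mrow i]
    linarith [hrow]
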